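/- Let r ≥ 0, a_T = √(2 log T), ρ(T) = r / log T, and let b_T be a function with b_T = a_T + O(a_T^{-1} log log T) as T → ∞. Fix x, z ∈ ℝ. Then (b_T + x/a_T − √(ρ(T)) z) / √(1 − ρ(T)) = b_T + (x + r − √(2r) z)/a_T + o(a_T^{-1}) as T → ∞. -/

import Mathlib

open Real Filter

theorem stmt_10 (r : ℝ) (hr : 0 ≤ r) (b : ℝ → ℝ) (x z : ℝ)
    (hb : ∃ C : ℝ, ∃ T₀ : ℝ, ∀ T : ℝ, T₀ ≤ T →
      |b T - Real.sqrt (2 * Real.log T)| ≤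
        C * (Real.log (Real.log T) / Real.sqrt (2 * Real.log T))) :
    Tendsto
      (fun T : ℝ =>
        Real.sqrt (2 * Real.log T) *
          ((b T + x / Real.sqrt (2 * Real.log T) -
              Real.sqrt (r / Real.log T) * z) / Real.sqrt (1 - r / Real.log T) -
            (b T + (x + r - Real.sqrt (2 * r) * z) / Real.sqrt (2 * Real.log T))))
      atTop (nhds 0) := by
  obtain ⟨C, T₀, hC⟩ := hb
  have hLtop : Tendsto Real.log atTop atTop := Real.tendsto_log_atTop
  have hρ0 : Tendsto (fun T => r / Real.log T) atTop (nhds 0) :=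
    tendsto_const_nhds.div_atTop hLtop
  have csq : ContinuousAt (fun u : ℝ => Real.sqrt (1 - u)) 0 :=
    (Real.continuous_sqrt.continuousAt).comp (by fun_prop)
  have hq1 : Tendsto (fun T => (Real.sqrt (1 - r / Real.log T))⁻¹ - 1) atTop (nhds 0) := by
    have c1 : ContinuousAt (fun u : ℝ => (Real.sqrt (1 - u))⁻¹ - 1) 0 := by
      have := csq.inv₀ (by simp)
      exact this.sub continuousAt_const
    have := c1.tendsto.comp hρ0
    simpa [Function.comp_def] using this
  -- h1 : 2 L (q - 1) → r
  have h1 : Tendsto (fun T => 2 * Real.log T * ((Real.sqrt (1 - r / Real.log T))⁻¹ - 1))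
      atTop (nhds r) := by
    have cg : ContinuousAt
        (fun u : ℝ => 2 * r / ((1 + Real.sqrt (1 - u)) * Real.sqrt (1 - u))) 0 := by
      apply ContinuousAt.div continuousAt_const
      · exact (continuousAt_const.add csq).mul csq
      · simp
    have hg := cg.tendsto.comp hρ0
    have hval : 2 * r / ((1 + Real.sqrt (1 - (0:ℝ))) * Real.sqrt (1 - (0:ℝ))) = r := by
      norm_num
    rw [hval] at hg
    have hg' : Tendsto (fun T => 2 * r /
        ((1 + Real.sqrt (1 - r / Real.log T)) * Real.sqrt (1 - r / Real.log T)))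
        atTop (nhds r) := hg
    apply hg'.congr'
    filter_upwards [hLtop.eventually_ge_atTop 1,
      hρ0.eventually (eventually_lt_nhds (by norm_num : (0:ℝ) < 1/2))] with T hL hρ
    set L := Real.log T
    have hL0 : (0:ℝ) < L := lt_of_lt_of_le one_pos hL
    have hLne : L ≠ 0 := hL0.ne'
    have hρ0' : 0 ≤ r / L := div_nonneg hr hL0.le
    have h1ρ : 0 < 1 - r / L := by linarith
    set w := Real.sqrt (1 - r / L) with hw
    have hw0 : 0 < w := Real.sqrt_pos.mpr h1ρ
    have hw2 : w * w = 1 - r / L := Real.mul_self_sqrt h1ρ.le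
    have h1w : 0 < 1 + w := by linarith
    have hw2' : w * w * L = L - r := by
      rw [hw2]; field_simp
    field_simp
    linear_combination hw2'
  -- h2 : a ε / (2L) → 0
  have hlog2 : Tendsto (fun T => Real.log (Real.log T) / Real.log T) atTop (nhds 0) :=
    (Real.isLittleO_log_id_atTop.tendsto_div_nhds_zero).comp hLtop
  have h2 : Tendsto (fun T => Real.sqrt (2 * Real.log T) * (b T - Real.sqrt (2 * Real.log T))
      / (2 * Real.log T)) atTop (nhds 0) := by
    have hg0 : Tendsto (fun T => |C| * (Real.log (Real.log T) / Real.log T) / 2) atTop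
        (nhds 0) := by
      have := (hlog2.const_mul |C|).div_const 2
      simpa using this
    refine squeeze_zero_norm' ?_ hg0
    filter_upwards [hLtop.eventually_ge_atTop 1, eventually_ge_atTop T₀] with T hL hT
    set L := Real.log T
    have hL0 : (0:ℝ) < L := lt_of_lt_of_le one_pos hL
    have hLne : L ≠ 0 := hL0.ne'
    have ha : (0:ℝ) < Real.sqrt (2 * L) := Real.sqrt_pos.mpr (by linarith)
    have hll : 0 ≤ Real.log L := Real.log_nonneg hL
    have hb' := hC T hT
    have key : Real.sqrt (2 * L) * |b T - Real.sqrt (2 * L)| ≤ |C| * Real.log L := by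
      calc Real.sqrt (2 * L) * |b T - Real.sqrt (2 * L)|
          ≤ Real.sqrt (2 * L) * (C * (Real.log L / Real.sqrt (2 * L))) :=
            mul_le_mul_of_nonneg_left hb' ha.le
        _ = C * Real.log L := by field_simp
        _ ≤ |C| * Real.log L := mul_le_mul_of_nonneg_right (le_abs_self C) hll
    rw [Real.norm_eq_abs, abs_div, abs_mul, abs_of_nonneg ha.le,
      abs_of_nonneg (by linarith : (0:ℝ) ≤ 2 * L)]
    rw [div_le_iff₀ (by linarith : (0:ℝ) < 2 * L)]
    calc Real.sqrt (2 * L) * |b T - Real.sqrt (2 * L)| ≤ |C| * Real.log L := key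
      _ = |C| * (Real.log L / L) / 2 * (2 * L) := by
          field_simp
  -- h3 : a ε (q-1) → 0
  have h3 : Tendsto (fun T => Real.sqrt (2 * Real.log T) * (b T - Real.sqrt (2 * Real.log T))
      * ((Real.sqrt (1 - r / Real.log T))⁻¹ - 1)) atTop (nhds 0) := by
    have hm := h2.mul h1
    rw [show (0:ℝ) = 0 * r by ring]
    apply hm.congr'
    filter_upwards [hLtop.eventually_ge_atTop 1] with T hL
    have hL0 : (0:ℝ) < Real.log T := lt_of_lt_of_le one_pos hL
    field_simp
  -- combine
  have hfinal : Tendsto (fun T =>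
      (x - Real.sqrt (2*r) * z) * ((Real.sqrt (1 - r / Real.log T))⁻¹ - 1)
      + 2 * Real.log T * ((Real.sqrt (1 - r / Real.log T))⁻¹ - 1)
      + Real.sqrt (2 * Real.log T) * (b T - Real.sqrt (2 * Real.log T))
        * ((Real.sqrt (1 - r / Real.log T))⁻¹ - 1)
      - r) atTop (nhds 0) := by
    have := (((hq1.const_mul (x - Real.sqrt (2*r) * z)).add h1).add h3).sub_const r
    simpa using this
  apply hfinal.congr'
  filter_upwards [hLtop.eventually_ge_atTop 1,
    hρ0.eventually (eventually_lt_nhds (by norm_num : (0:ℝ) < 1/2))] with T hL hρ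
  set L := Real.log T
  have hL0 : (0:ℝ) < L := lt_of_lt_of_le one_pos hL
  have hLne : L ≠ 0 := hL0.ne'
  have hρnn : 0 ≤ r / L := div_nonneg hr hL0.le
  have h1ρ : 0 < 1 - r / L := by linarith
  have ha : (0:ℝ) < Real.sqrt (2 * L) := Real.sqrt_pos.mpr (by linarith)
  have hA2 : Real.sqrt (2*L) * Real.sqrt (2*L) = 2 * L := Real.mul_self_sqrt (by linarith)
  have hw0 : 0 < Real.sqrt (1 - r / L) := Real.sqrt_pos.mpr h1ρ
  set w := Real.sqrt (1 - r / L)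
  set A := Real.sqrt (2 * L) with hA
  have hs : Real.sqrt (r / L) = Real.sqrt (2*r) / A := by
    rw [eq_div_iff ha.ne', mul_comm, hA, ← Real.sqrt_mul (by linarith : (0:ℝ) ≤ 2*L)]
    congr 1
    field_simp
  rw [hs, ← hA2]
  field_simp
  ring
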